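/- For every session behaviour σ, the set R = { σ' | σ ⟹ σ' and σ' has no further unlabelled transitions } is a singleton, and its unique element is either 1, or an external choice a₁.σ₁ + ⋯ + aₙ.σₙ, or σ itself when σ is an internal choice; in particular R is nonempty and finite. -/

import Mathlib

/-- Names of actions. -/
abbrev Name := ℕ

/-- Session behaviours (raw behaviour expressions), with de Bruijn variables.
    `ext l` is an external choice `a₁.σ₁ + ⋯ + aₙ.σₙ`,
    `int l` is an internal choice `ā₁.σ₁ ⊕ ⋯ ⊕ āₙ.σₙ` (a singleton is an output prefix `ā.σ`),
    `fix σ` is `rec x.σ`. -/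
inductive SB : Type where
  | one : SB
  | ext : List (Name × SB) → SB
  | int : List (Name × SB) → SB
  | var : ℕ → SB
  | fix : SB → SB

namespace SB

mutual
/-- Substitution of the (closed) term `t` for de Bruijn variable `k`. -/
def subst (t : SB) : SB → ℕ → SB
  | .one, _ => .one
  | .var n, k => if n = k then t else .var n
  | .ext l, k => .ext (substL t l k)
  | .int l, k => .int (substL t l k)
  | .fix σ, k => .fix (subst t σ (k + 1))
def substL (t : SB) : List (Name × SB) → ℕ → List (Name × SB)
  | [], _ => []
  | p :: l, k => (p.1, subst t p.2 k) :: substL t l k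
end

mutual
/-- Syntactic duality: interchange inputs with outputs, `+` with `⊕`. -/
def dual : SB → SB
  | .one => .one
  | .var n => .var n
  | .ext l => .int (dualL l)
  | .int l => .ext (dualL l)
  | .fix σ => .fix (dual σ)
def dualL : List (Name × SB) → List (Name × SB)
  | [] => []
  | p :: l => (p.1, dual p.2) :: dualL l
end

/-- All free variables are `< k`. -/
inductive ClosedAt : ℕ → SB → Prop where
  | one : ∀ {k}, ClosedAt k .one
  | var : ∀ {k n}, n < k → ClosedAt k (.var n)
  | ext : ∀ {k l}, (∀ p ∈ l, ClosedAt k p.2) → ClosedAt k (.ext l)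
  | int : ∀ {k l}, (∀ p ∈ l, ClosedAt k p.2) → ClosedAt k (.int l)
  | fix : ∀ {k σ}, ClosedAt (k + 1) σ → ClosedAt k (.fix σ)

/-- Guardedness: after stripping `rec`s one reaches a prefix/choice constructor (not a variable). -/
inductive Guarded : SB → Prop where
  | one : Guarded .one
  | ext : ∀ {l}, Guarded (.ext l)
  | int : ∀ {l}, Guarded (.int l)
  | fix : ∀ {σ}, Guarded σ → Guarded (.fix σ)

/-- Well-formedness: choices are nonempty with pairwise distinct names, recursion is guarded. -/
inductive WF : SB → Prop where
  | one : WF .one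
  | var : ∀ {n}, WF (.var n)
  | ext : ∀ {l}, l ≠ [] → (l.map Prod.fst).Nodup → (∀ p ∈ l, WF p.2) → WF (.ext l)
  | int : ∀ {l}, l ≠ [] → (l.map Prod.fst).Nodup → (∀ p ∈ l, WF p.2) → WF (.int l)
  | fix : ∀ {σ}, Guarded σ → WF σ → WF (.fix σ)

/-- `σ` is a session behaviour: well formed and closed. -/
def SBok (σ : SB) : Prop := WF σ ∧ ClosedAt 0 σ

/-- Visible actions. -/
inductive Act : Type where
  | inp : Name → Act
  | out : Name → Act
deriving DecidableEq

/-- The dual action. -/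
def Act.dualAct : Act → Act
  | .inp a => .out a
  | .out a => .inp a

/-- Unlabelled transitions: internal-choice selection (of a genuine choice, `n ≥ 2`)
    and recursion unfolding. -/
inductive Red : SB → SB → Prop where
  | sel : ∀ {l} {p : Name × SB}, 2 ≤ l.length → p ∈ l → Red (.int l) (.int [p])
  | unf : ∀ {σ}, Red (.fix σ) (subst (.fix σ) σ 0)

/-- Recursion-unfolding steps only. -/
inductive URed : SB → SB → Prop where
  | unf : ∀ {σ}, URed (.fix σ) (subst (.fix σ) σ 0)

def RedStar : SB → SB → Prop := Relation.ReflTransGen Red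

/-- Labelled transitions. -/
inductive Step : SB → Act → SB → Prop where
  | inp : ∀ {l a σ}, (a, σ) ∈ l → Step (.ext l) (.inp a) σ
  | out : ∀ {a σ}, Step (.int [(a, σ)]) (.out a) σ

/-- Weak labelled transition `σ ⟹α σ'`. -/
def VStep (σ : SB) (α : Act) (σ' : SB) : Prop := ∃ σ₁, RedStar σ σ₁ ∧ Step σ₁ α σ'

/-- The client can weakly perform the input `a`. -/
def WInp (ρ : SB) (a : Name) : Prop := ∃ ρ', VStep ρ (.inp a) ρ'

/-- Synchronization actions. -/
inductive SyncAct : Type where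
  | tau : SyncAct
  | skp : SyncAct
deriving DecidableEq

/-- Unlabelled steps of a client/server pair. -/
inductive PRed : SB × SB → SB × SB → Prop where
  | left : ∀ {ρ ρ' σ}, Red ρ ρ' → PRed (ρ, σ) (ρ', σ)
  | right : ∀ {ρ σ σ'}, Red σ σ' → PRed (ρ, σ) (ρ, σ')

/-- Labelled steps of a client/server pair: `τ` handshake of dual actions, and
    `skp`, discarding a server output `ā` that the client cannot weakly input. -/
inductive PLab : SB × SB → SyncAct → SB × SB → Prop where
  | tau : ∀ {ρ ρ' σ σ' α}, Step ρ α ρ' → Step σ α.dualAct σ' → PLab (ρ, σ) .tau (ρ', σ')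
  | skp : ∀ {ρ σ σ' a}, ¬ WInp ρ a → Step σ (.out a) σ' → PLab (ρ, σ) .skp (ρ, σ')

def PRedStar : SB × SB → SB × SB → Prop := Relation.ReflTransGen PRed

/-- `q ⟹ξ q'` : a `ξ`-labelled step up to unlabelled steps. -/
def SyncStep (q : SB × SB) (ξ : SyncAct) (q' : SB × SB) : Prop :=
  ∃ q₁ q₂, PRedStar q q₁ ∧ PLab q₁ ξ q₂ ∧ PRedStar q₂ q'

def SyncReach : SB × SB → SB × SB → Prop :=
  Relation.ReflTransGen (fun q q' => ∃ ξ, SyncStep q ξ q')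

/-- An infinite sequence of synchronization actions is definitely-skp. -/
def DefinitelySkp (ξs : ℕ → SyncAct) : Prop := ∃ k, ∀ h, k < h → ξs h = SyncAct.skp

/-- skp-compliance `ρ ⊣skp σ`: every finite synchronization trace ends in success
    (the client is `1` whenever no further synchronization step is possible), and
    no infinite synchronization trace (with the client never equal to `1`) is definitely-skp. -/
def Compliant (ρ σ : SB) : Prop :=
  (∀ q, SyncReach (ρ, σ) q → q.1 ≠ SB.one → ∃ ξ q', SyncStep q ξ q') ∧
  (∀ (f : ℕ → SB × SB) (ξs : ℕ → SyncAct),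
      f 0 = (ρ, σ) → (∀ n, SyncStep (f n) (ξs n) (f (n + 1))) →
      (∀ n, (f n).1 ≠ SB.one) → ¬ DefinitelySkp ξs)

/-- Standard compliance `ρ ⊣ σ`: only `τ` handshakes; every reachable stuck state
    has client `1`. -/
def StdCompliant (ρ σ : SB) : Prop :=
  ∀ q, Relation.ReflTransGen (fun x y => PRed x y ∨ PLab x SyncAct.tau y) (ρ, σ) q →
    (∀ q', ¬ (PRed q q' ∨ PLab q SyncAct.tau q')) → q.1 = SB.one

/-- skp-subbehaviour: every skp-compliant client of `σ` is one of `σ'`. -/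
def SubB (σ σ' : SB) : Prop := ∀ ρ, SBok ρ → Compliant ρ σ → Compliant ρ σ'

/-- Standard subbehaviour. -/
def SubStd (σ σ' : SB) : Prop := ∀ ρ, SBok ρ → StdCompliant ρ σ → StdCompliant ρ σ'

/-- `ρ ⇓ r`: `r` is the (unique) stuck term reached from `ρ` by unfolding recursion. -/
def Conv (ρ r : SB) : Prop :=
  Relation.ReflTransGen URed ρ r ∧ ∀ r', ¬ URed r r'

/-- Finite maximal traces of visible actions. -/
inductive FTrace : SB → List Act → Prop where
  | nil : ∀ {σ}, (∀ α σ', ¬ VStep σ α σ') → FTrace σ []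
  | cons : ∀ {σ σ' α tr}, VStep σ α σ' → FTrace σ' tr → FTrace σ (α :: tr)

/-- `Syncable α σ`: every (finite maximal or infinite) trace of the server `σ` consists of a
    finite prefix of outputs, none equal to the dual of `α`, followed by the dual of `α`. -/
def Syncable (α : Act) (σ : SB) : Prop :=
  (∀ tr, FTrace σ tr →
      ∃ pre post, tr = pre ++ α.dualAct :: post ∧
        ∀ β ∈ pre, (∃ b, β = Act.out b) ∧ β ≠ α.dualAct) ∧
  (∀ (f : ℕ → SB) (g : ℕ → Act), f 0 = σ → (∀ n, VStep (f n) (g n) (f (n + 1))) →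
      ∃ n, g n = α.dualAct ∧ ∀ m, m < n → (∃ b, g m = Act.out b) ∧ g m ≠ α.dualAct)

/-- `q ⟹skp* τ q'`. -/
def SkpsTau (q q' : SB × SB) : Prop :=
  ∃ q₁, Relation.ReflTransGen (fun x y => SyncStep x SyncAct.skp y) q q₁ ∧
    SyncStep q₁ SyncAct.tau q'

/-- The coinductive skip-compliance operator `H`. -/
def Hop (R : SB × SB → Prop) (q : SB × SB) : Prop :=
  Conv q.1 .one ∨
  ((∀ l, Conv q.1 (.ext l) →
      (∃ p ∈ l, Syncable (.inp p.1) q.2) ∧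
      ∀ p ∈ l, ∀ σ', SkpsTau (.ext [p], q.2) (p.2, σ') → R (p.2, σ')) ∧
   (∀ l, Conv q.1 (.int l) →
      (∀ p ∈ l, Syncable (.out p.1) q.2) ∧
      ∀ p ∈ l, ∀ σ', SkpsTau (.int [p], q.2) (p.2, σ') → R (p.2, σ')))

end SB

/-- The relation `⊑` on (nonempty) finite sequences of names. -/
inductive SubSeq {α : Type} : List α → List α → Prop where
  | single : ∀ {b : α} {pre : List α}, b ∉ pre → SubSeq [b] (pre ++ [b])
  | cons : ∀ {b : α} {pre u v : List α}, b ∉ pre → SubSeq u v → SubSeq (b :: u) (pre ++ b :: v)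

open SB

/-- The set of stuck terms reachable by unlabelled steps. -/
def RSet (σ : SB) : Set SB :=
  {r | Relation.ReflTransGen SB.URed σ r ∧ ∀ r', ¬ SB.URed r r'}

namespace RSetAux

/-- Number of leading `fix` constructors. -/
def fixCount : SB → ℕ
  | .fix σ => fixCount σ + 1
  | _ => 0

theorem guarded_subst {t σ : SB} (h : Guarded σ) : ∀ k, Guarded (subst t σ k) := by
  induction h with
  | one => intro k; exact Guarded.one
  | ext => intro k; exact Guarded.ext
  | int => intro k; exact Guarded.int
  | fix _ ih => intro k; exact Guarded.fix (ih _)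

theorem fixCount_subst {t σ : SB} (h : Guarded σ) :
    ∀ k, fixCount (subst t σ k) = fixCount σ := by
  induction h with
  | one => intro k; rfl
  | ext => intro k; rfl
  | int => intro k; rfl
  | fix _ ih => intro k; simp [subst, fixCount, ih]

theorem closedAt_mono {j σ} (h : ClosedAt j σ) : ∀ {k}, j ≤ k → ClosedAt k σ := by
  induction h with
  | one => intro k _; exact ClosedAt.one
  | var hn => intro k hk; exact ClosedAt.var (lt_of_lt_of_le hn hk)
  | ext _ ih => intro k hk; exact ClosedAt.ext (fun p hp => ih p hp hk)
  | int _ ih => intro k hk; exact ClosedAt.int (fun p hp => ih p hp hk)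
  | fix _ ih => intro k hk; exact ClosedAt.fix (ih (Nat.succ_le_succ hk))

theorem mem_substL {t : SB} : ∀ {l : List (Name × SB)} {k p},
    p ∈ substL t l k → ∃ q ∈ l, p.2 = subst t q.2 k := by
  intro l
  induction l with
  | nil => intro k p hp; simp [substL] at hp
  | cons q l ih =>
    intro k p hp
    simp only [substL, List.mem_cons] at hp
    rcases hp with rfl | hp
    · exact ⟨q, List.mem_cons_self, rfl⟩
    · obtain ⟨q', hq', he⟩ := ih hp
      exact ⟨q', List.mem_cons_of_mem _ hq', he⟩

theorem closedAt_subst_aux {t : SB} (ht : ClosedAt 0 t) :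
    ∀ {m σ}, ClosedAt m σ → ∀ k, m = k + 1 → ClosedAt k (subst t σ k) := by
  intro m σ h
  induction h with
  | one => intro k _; exact ClosedAt.one
  | @var _ n hn =>
    intro k hk
    subst hk
    simp only [subst]
    by_cases hnk : n = k
    · simp only [hnk, if_pos rfl]; exact closedAt_mono ht (Nat.zero_le _)
    · simp only [hnk, if_neg hnk]
      exact ClosedAt.var (lt_of_le_of_ne (Nat.lt_succ_iff.mp hn) hnk)
  | ext _ ih =>
    intro k hk
    simp only [subst]
    refine ClosedAt.ext (fun p hp => ?_)
    obtain ⟨q, hq, he⟩ := mem_substL hp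
    rw [he]; exact ih q hq k hk
  | int _ ih =>
    intro k hk
    simp only [subst]
    refine ClosedAt.int (fun p hp => ?_)
    obtain ⟨q, hq, he⟩ := mem_substL hp
    rw [he]; exact ih q hq k hk
  | fix _ ih =>
    intro k hk
    simp only [subst]
    exact ClosedAt.fix (ih (k + 1) (by omega))

theorem closedAt_subst {t σ : SB} {k : ℕ} (ht : ClosedAt 0 t)
    (h : ClosedAt (k + 1) σ) : ClosedAt k (subst t σ k) :=
  closedAt_subst_aux ht h k rfl

theorem ured_det {σ a b : SB} (h1 : URed σ a) (h2 : URed σ b) : a = b := by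
  cases h1; cases h2; rfl

theorem exists_normal : ∀ n σ, fixCount σ = n → Guarded σ → ClosedAt 0 σ →
    ∃ r, Relation.ReflTransGen URed σ r ∧ (∀ r', ¬ URed r r') ∧ ClosedAt 0 r := by
  intro n
  induction n using Nat.strong_induction_on with
  | _ n ih =>
    intro σ hn hg hc
    cases hg with
    | one => exact ⟨.one, Relation.ReflTransGen.refl, (fun r' h => by cases h), hc⟩
    | @ext l => exact ⟨.ext l, Relation.ReflTransGen.refl, (fun r' h => by cases h), hc⟩
    | @int l => exact ⟨.int l, Relation.ReflTransGen.refl, (fun r' h => by cases h), hc⟩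
    | @fix τ hτ =>
      have hc1 : ClosedAt 1 τ := by cases hc with | fix h => exact h
      have hstep : URed (.fix τ) (subst (.fix τ) τ 0) := URed.unf
      have hg' : Guarded (subst (.fix τ) τ 0) := guarded_subst hτ 0
      have hc' : ClosedAt 0 (subst (.fix τ) τ 0) := closedAt_subst hc hc1
      have hcnt : fixCount (subst (.fix τ) τ 0) = fixCount τ := fixCount_subst hτ 0
      have hlt : fixCount τ < n := by
        subst hn; simp [fixCount]
      obtain ⟨r, hr1, hr2, hr3⟩ := ih _ hlt _ hcnt hg' hc'
      exact ⟨r, Relation.ReflTransGen.head hstep hr1, hr2, hr3⟩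

theorem normal_unique : ∀ {σ r₁ r₂ : SB},
    Relation.ReflTransGen URed σ r₁ → (∀ r', ¬ URed r₁ r') →
    Relation.ReflTransGen URed σ r₂ → (∀ r', ¬ URed r₂ r') → r₁ = r₂ := by
  intro σ r₁ r₂ h1
  induction h1 using Relation.ReflTransGen.head_induction_on with
  | refl =>
    intro hs1 h2 hs2
    rcases h2.cases_head with rfl | ⟨c, hc, _⟩
    · rfl
    · exact absurd hc (hs1 c)
  | head step rest ih =>
    intro hs1 h2 hs2
    rcases h2.cases_head with rfl | ⟨c, hc, hc'⟩
    · exact absurd step (hs2 _)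
    · obtain rfl := ured_det step hc
      exact ih hs1 hc' hs2

end RSetAux

/-- for every session behaviour σ, `RSet σ` is a singleton whose
    unique element is `1`, an external choice, or an internal choice (σ itself
    when σ is an internal choice); in particular it is nonempty and finite. -/
theorem RSet_singleton : ∀ σ : SB, SBok σ →
    ∃ r, RSet σ = {r} ∧
      (r = SB.one ∨ (∃ l, r = SB.ext l) ∨ (∃ l, r = SB.int l)) ∧
      (∀ l, σ = SB.int l → r = σ) ∧
      (RSet σ).Finite ∧ (RSet σ).Nonempty := by
  intro σ hok
  obtain ⟨hwf, hc⟩ := hok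
  have hg : Guarded σ := by
    cases hwf with
    | one => exact Guarded.one
    | var => cases hc with | var h => exact absurd h (Nat.not_lt_zero _)
    | ext _ _ _ => exact Guarded.ext
    | int _ _ _ => exact Guarded.int
    | fix hg _ => exact Guarded.fix hg
  obtain ⟨r, hr1, hr2, hr3⟩ := RSetAux.exists_normal _ σ rfl hg hc
  have hmem : r ∈ RSet σ := ⟨hr1, hr2⟩
  have hset : RSet σ = {r} := by
    ext x
    constructor
    · rintro ⟨hx1, hx2⟩
      exact RSetAux.normal_unique hx1 hx2 hr1 hr2
    · rintro rfl; exact hmem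
  refine ⟨r, hset, ?_, ?_, ?_, ?_⟩
  · cases r with
    | one => exact Or.inl rfl
    | ext l => exact Or.inr (Or.inl ⟨l, rfl⟩)
    | int l => exact Or.inr (Or.inr ⟨l, rfl⟩)
    | var n => cases hr3 with | var h => exact absurd h (Nat.not_lt_zero _)
    | fix τ => exact absurd URed.unf (hr2 _)
  · intro l hσ
    subst hσ
    have : SB.int l ∈ RSet (SB.int l) :=
      ⟨Relation.ReflTransGen.refl, fun r' h => by cases h⟩
    rw [hset] at this
    exact this.symm
  · rw [hset]; exact Set.finite_singleton r
  · rw [hset]; exact ⟨r, rfl⟩
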